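/- Consider a noncanonical game of 2m+1 rounds (m ≥ 1) on ℂ^n in which player 1 makes the first and the last move. If the action group A of player 1 contains every n×n permutation matrix and contains a unitary U such that the state ψ = U e_{q0} is invariant under the action group B of player 2 (i.e. B_i ψ = ψ for every B_i ∈ B), then player 1 has a strong winning strategy: there exist A_1, …, A_{m+1} ∈ A (namely A_1 = U, A_2 = ⋯ = A_m = I, A_{m+1} = T_{q0,qA} U^{-1}) such that for every choice B_1, …, B_m ∈ B one has A_{m+1} B_m A_m ⋯ B_1 A_1 e_{q0} = e_{qA}. -/

import Mathlib

/-- The product of the moves in a canonical `2m`-round game, namely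
`B_m * A_m * ⋯ * B_1 * A_1`, where player 1 plays `A_1, …, A_m` at odd rounds and
player 2 plays `B_1, …, B_m` at even rounds. -/
noncomputable def canonicalProd {n m : ℕ} (As Bs : Fin m → Matrix (Fin n) (Fin n) ℂ) :
    Matrix (Fin n) (Fin n) ℂ :=
  ((List.ofFn fun i => Bs i * As i).reverse).prod

/-- The product of the moves in a noncanonical `2m+1`-round game, namely
`A_{m+1} * B_m * A_m * ⋯ * B_1 * A_1`, where player 1 makes the first and the
last move. -/
noncomputable def noncanonicalProd {n m : ℕ} (As : Fin (m + 1) → Matrix (Fin n) (Fin n) ℂ)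
    (Bs : Fin m → Matrix (Fin n) (Fin n) ℂ) : Matrix (Fin n) (Fin n) ℂ :=
  As (Fin.last m) * ((List.ofFn fun i : Fin m => Bs i * As i.castSucc).reverse).prod

/-- The underlying matrix of an element of a subgroup of the unitary group. -/
noncomputable def toMat {n : ℕ} {G : Subgroup (Matrix.unitaryGroup (Fin n) ℂ)} (x : G) :
    Matrix (Fin n) (Fin n) ℂ :=
  ((x : Matrix.unitaryGroup (Fin n) ℂ) : Matrix (Fin n) (Fin n) ℂ)

/-- `G` contains (the standard matrix representation of) the symmetric group `S_n`:
every `n × n` permutation matrix belongs to `G`. -/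
def containsSn {n : ℕ} (G : Subgroup (Matrix.unitaryGroup (Fin n) ℂ)) : Prop :=
  ∀ σ : Equiv.Perm (Fin n), ∃ P ∈ G,
    ((P : Matrix.unitaryGroup (Fin n) ℂ) : Matrix (Fin n) (Fin n) ℂ) = σ.permMatrix ℂ
lemma list_prod_fix {n : ℕ} (ψ : Fin n → ℂ) :
    ∀ (l : List (Matrix (Fin n) (Fin n) ℂ)), (∀ M ∈ l, M.mulVec ψ = ψ) →
      l.prod.mulVec ψ = ψ := by
  intro l
  induction l with
  | nil => simp [Matrix.one_mulVec]
  | cons a l ih =>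
    intro h
    rw [List.prod_cons, ← Matrix.mulVec_mulVec, ih (fun M hM => h M (List.mem_cons_of_mem _ hM)),
      h a List.mem_cons_self]

lemma permMatrix_mulVec_single {n : ℕ} (σ : Equiv.Perm (Fin n)) (j : Fin n) :
    (σ.permMatrix ℂ).mulVec (Pi.single j 1) = Pi.single (σ⁻¹ j) 1 := by
  ext i
  simp only [Matrix.mulVec_single_one, Equiv.Perm.permMatrix, PEquiv.toMatrix, Equiv.toPEquiv,
    Pi.single_apply, Matrix.transpose_apply, Matrix.col_apply, Matrix.of_apply, PEquiv.coe_mk, Option.mem_def,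
    Option.some_inj]
  by_cases h : i = σ⁻¹ j
  · subst h; simp
  · rw [if_neg h, if_neg]
    intro hc
    simp only [Function.comp_apply, Option.some_inj] at hc
    exact h (by rw [← hc, Equiv.Perm.inv_def, Equiv.symm_apply_apply])

theorem noncanonical_invariant_state_sws_player1
    (n m : ℕ) (hn : 2 ≤ n) (hm : 1 ≤ m)
    (A B : Subgroup (Matrix.unitaryGroup (Fin n) ℂ)) (hSn : containsSn A)
    (q0 qA qB : Fin n) (hq : qA ≠ qB)
    (U : Matrix.unitaryGroup (Fin n) ℂ) (hU : U ∈ A)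
    (hinv : ∀ Bi ∈ B, ((Bi : Matrix.unitaryGroup (Fin n) ℂ) : Matrix (Fin n) (Fin n) ℂ).mulVec
        ((U : Matrix (Fin n) (Fin n) ℂ).mulVec (Pi.single q0 1))
      = (U : Matrix (Fin n) (Fin n) ℂ).mulVec (Pi.single q0 1)) :
    ∃ As : Fin (m + 1) → A, ∀ Bs : Fin m → B,
      (noncanonicalProd (fun i => toMat (As i)) (fun i => toMat (Bs i))).mulVec
        (Pi.single q0 1) = Pi.single qA 1 := by
  obtain ⟨k, rfl⟩ : ∃ k, m = k + 1 := ⟨m - 1, by omega⟩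
  obtain ⟨P, hP, hPmat⟩ := hSn (Equiv.swap q0 qA)
  set UA : A := ⟨U, hU⟩
  set PA : A := ⟨P, hP⟩
  refine ⟨fun i => if i = 0 then UA else if i = Fin.last (k + 1) then PA * UA⁻¹ else 1, ?_⟩
  intro Bs
  set ψ : Fin n → ℂ := (U : Matrix (Fin n) (Fin n) ℂ).mulVec (Pi.single q0 1) with hψ
  have hlast0 : (Fin.last (k + 1) : Fin (k + 1 + 1)) ≠ 0 := by
    simp [Fin.ext_iff]
  rw [noncanonicalProd]
  have hofn : (List.ofFn fun i : Fin (k + 1) =>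
      toMat (Bs i) * toMat ((if i.castSucc = 0 then UA
        else if i.castSucc = Fin.last (k + 1) then PA * UA⁻¹ else 1)))
      = (toMat (Bs 0) * toMat UA) :: List.ofFn (fun i : Fin k =>
          toMat (Bs i.succ) * toMat (1 : A)) := by
    have hfun : (fun i : Fin (k + 1) => toMat (Bs i) * toMat ((if i.castSucc = 0 then UA
        else if i.castSucc = Fin.last (k + 1) then PA * UA⁻¹ else 1)))
        = fun i : Fin (k + 1) => toMat (Bs i) * toMat (if i = 0 then UA else 1) := by
      funext i
      have h2 : (i.castSucc : Fin (k + 1 + 1)) ≠ Fin.last (k + 1) :=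
        (Fin.castSucc_lt_last i).ne
      by_cases h : i = 0
      · subst h
        rw [Fin.castSucc_zero, if_pos rfl, if_pos rfl]
      · have h1 : (i.castSucc : Fin (k + 1 + 1)) ≠ 0 := by
          intro hc
          exact h (Fin.castSucc_inj.mp (hc.trans Fin.castSucc_zero.symm))
        rw [if_neg h1, if_neg h2, if_neg h]
    rw [hfun, List.ofFn_succ]
    have hhead : (if (0 : Fin (k + 1)) = 0 then UA else 1) = UA := if_pos rfl
    rw [hhead]
    congr 1
  rw [hofn]
  rw [List.reverse_cons, List.prod_append, List.prod_singleton]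
  have hmid : (List.ofFn fun i : Fin k => toMat (Bs i.succ) * toMat (1 : A)).reverse.prod.mulVec ψ
      = ψ := by
    apply list_prod_fix
    intro M hM
    rw [List.mem_reverse, List.mem_ofFn] at hM
    obtain ⟨i, rfl⟩ := hM
    have h1 : toMat (Bs i.succ) * toMat (1 : A) = toMat (Bs i.succ) := by
      have : toMat (1 : A) = (1 : Matrix (Fin n) (Fin n) ℂ) := rfl
      rw [this, mul_one]
    simp only [h1]
    exact hinv _ (Bs i.succ).2
  have hfirst : (toMat (Bs 0) * toMat UA).mulVec (Pi.single q0 1) = ψ := by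
    rw [← Matrix.mulVec_mulVec]
    exact hinv _ (Bs 0).2
  rw [← Matrix.mulVec_mulVec, ← Matrix.mulVec_mulVec, hfirst, hmid]
  show (toMat (if (Fin.last (k + 1) : Fin (k + 1 + 1)) = 0 then UA
      else if (Fin.last (k + 1) : Fin (k + 1 + 1)) = Fin.last (k + 1) then PA * UA⁻¹
      else 1)).mulVec ψ = Pi.single qA 1
  rw [if_neg hlast0, if_pos rfl]
  have hUinv : toMat (UA⁻¹) * (U : Matrix (Fin n) (Fin n) ℂ)
      = (1 : Matrix (Fin n) (Fin n) ℂ) := by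
    have h1 : ((UA⁻¹ : A) : Matrix.unitaryGroup (Fin n) ℂ) * U = 1 := by
      have h0 : ((UA⁻¹ : A) : Matrix.unitaryGroup (Fin n) ℂ) = U⁻¹ := rfl
      rw [h0, inv_mul_cancel]
    calc toMat (UA⁻¹) * (U : Matrix (Fin n) (Fin n) ℂ)
        = ((((UA⁻¹ : A) : Matrix.unitaryGroup (Fin n) ℂ) * U : Matrix.unitaryGroup (Fin n) ℂ) :
            Matrix (Fin n) (Fin n) ℂ) := rfl
      _ = 1 := by rw [h1]; rfl
  have hPm : toMat (PA * UA⁻¹) = (Equiv.swap q0 qA).permMatrix ℂ * toMat (UA⁻¹) := by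
    rw [← hPmat]; rfl
  rw [hPm, hψ, Matrix.mulVec_mulVec, Matrix.mul_assoc, hUinv, mul_one,
    permMatrix_mulVec_single]
  simp
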